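/- Let G_1 be a finite simple connected graph which is the union of a path v_1 v_2 … v_l (l ≥ 2), a connected subgraph H_1 with at least 2 vertices meeting the path exactly in the vertex v_1, and a connected subgraph H_2 with at least 2 vertices meeting the path exactly in the vertex v_l, where H_1 and H_2 are disjoint, V(G_1) = V(H_1) ∪ {v_1, …, v_l} ∪ V(H_2), every edge of G_1 lies in H_1, in H_2, or on the path, and the internal vertices v_2, …, v_{l−1} have degree 2 in G_1. Let G_2 be the graph obtained from G_1 by deleting every edge v_l x with x a neighbor of v_l in H_2 and adding the edge v_1 x for every such x. Then ξ^{ee}(G_1) < ξ^{ee}(G_2). -/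

import Mathlib

open SimpleGraph

variable {V : Type*}

noncomputable def ecc (G : SimpleGraph V) (v : V) : ℕ := ⨆ u : V, G.dist v u

noncomputable def deg (G : SimpleGraph V) (v : V) : ℕ := (G.neighborSet v).ncard

noncomputable def ree {V : Type*} [Fintype V] (G : SimpleGraph V) : ℝ :=
  letI := Classical.decEq V
  letI := Classical.decRel G.Adj
  ∑ e ∈ G.edgeFinset,
    Sym2.lift ⟨fun u v => 1 / (ecc G u : ℝ) + 1 / (ecc G v : ℝ), fun _ _ => by ring⟩ e

noncomputable def gdiam (G : SimpleGraph V) : ℕ := ⨆ v : V, ecc G v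

namespace S3A

/-- potential function bound along a walk -/
lemma potential_le {G : SimpleGraph V} {f : V → ℕ}
    (hf : ∀ x y, G.Adj x y → f x ≤ f y + 1) {u v : V} (w : G.Walk u v) :
    f u ≤ f v + w.length := by
  induction w with
  | nil => simp
  | cons h w ih =>
    have := hf _ _ h
    simp only [Walk.length_cons]
    omega

lemma potential_le_dist {G : SimpleGraph V} {f : V → ℕ}
    (hf : ∀ x y, G.Adj x y → f x ≤ f y + 1) {u v : V} (hr : G.Reachable u v) :
    f u ≤ f v + G.dist u v := by
  obtain ⟨w, hw⟩ := hr.exists_walk_length_eq_dist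
  simpa [hw] using potential_le hf w

/-- a walk entering `T` from outside must pass through `c` -/
lemma cross_mem_support {G : SimpleGraph V} {T : Set V} {c : V}
    (hc : ∀ x y, G.Adj x y → x ∉ T → y ∈ T → y = c) :
    ∀ {a b : V} (w : G.Walk a b), a ∉ T → b ∈ T → c ∈ w.support := by
  intro a b w
  induction w with
  | nil => intro ha hb; exact absurd hb ha
  | @cons a x b h w ih =>
    intro ha hb
    by_cases hx : x ∈ T
    · have := hc a x h ha hx
      subst this
      simp [Walk.support_cons]
    · have := ih hx hb
      simp only [Walk.support_cons, List.mem_cons]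
      right; exact this

/-- a path between two vertices of `T` stays in `T` when all boundary edges
meet `T` in the single vertex `c`. -/
lemma path_support_subset {G : SimpleGraph V} {T : Set V} {c : V}
    (hc : ∀ x y, G.Adj x y → x ∈ T → y ∉ T → x = c) :
    ∀ {a b : V} (w : G.Walk a b), w.IsPath → a ∈ T → b ∈ T → ∀ z ∈ w.support, z ∈ T := by
  intro a b w
  induction w with
  | nil => intro _ ha _ z hz; simp at hz; subst hz; exact ha
  | @cons a x b h w ih =>
    intro hp ha hb z hz
    by_cases hx : x ∈ T
    · simp only [Walk.support_cons, List.mem_cons] at hz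
      rcases hz with rfl | hz
      · exact ha
      · exact ih hp.of_cons hx hb z hz
    · exfalso
      have hac : a = c := hc a x h ha hx
      have hcw : c ∈ w.support := by
        refine cross_mem_support (fun x' y' h' hx' hy' => ?_) w hx hb
        exact (hc y' x' h'.symm hy' hx').symm ▸ rfl
      rw [Walk.cons_isPath_iff] at hp
      exact hp.2 (hac ▸ hcw)

/-- mapping a walk whose support lies in `T` to another graph -/
lemma exists_walk_map {G G' : SimpleGraph V} {T : Set V} (f : V → V)
    (hf : ∀ x y, G.Adj x y → x ∈ T → y ∈ T → G'.Adj (f x) (f y)) :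
    ∀ {a b : V} (w : G.Walk a b), (∀ z ∈ w.support, z ∈ T) →
      ∃ w' : G'.Walk (f a) (f b), w'.length = w.length := by
  intro a b w
  induction w with
  | nil => intro _; exact ⟨Walk.nil, rfl⟩
  | @cons a x b h w ih =>
    intro hs
    have ha : a ∈ T := hs a (by simp [Walk.support_cons])
    have hx : x ∈ T := hs x (by simp [Walk.support_cons, Walk.start_mem_support])
    obtain ⟨w', hw'⟩ := ih (fun z hz => hs z (by simp only [Walk.support_cons, List.mem_cons]; right; exact hz))
    exact ⟨Walk.cons (hf a x h ha hx) w', by simp [hw']⟩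

lemma dist_transfer {G G' : SimpleGraph V} {T : Set V} {c : V} (hG : G.Connected)
    (hc : ∀ x y, G.Adj x y → x ∈ T → y ∉ T → x = c)
    (f : V → V)
    (hf : ∀ x y, G.Adj x y → x ∈ T → y ∈ T → G'.Adj (f x) (f y))
    {u v : V} (hu : u ∈ T) (hv : v ∈ T) :
    G'.dist (f u) (f v) ≤ G.dist u v := by
  obtain ⟨w, hw, hlen⟩ := (hG u v).exists_path_of_dist
  obtain ⟨w', hw'⟩ := exists_walk_map f hf w (path_support_subset hc w hw hu hv)
  calc G'.dist (f u) (f v) ≤ w'.length := SimpleGraph.dist_le w'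
    _ = G.dist u v := by rw [hw', hlen]

lemma dist_cut {G : SimpleGraph V} (hG : G.Connected) {u v c : V}
    (h : ∀ w : G.Walk u v, c ∈ w.support) :
    G.dist u v = G.dist u c + G.dist c v := by
  classical
  refine le_antisymm (hG.dist_triangle) ?_
  obtain ⟨w, hlen⟩ := (hG u v).exists_walk_length_eq_dist
  have hc := h w
  have h1 := SimpleGraph.dist_le (w.takeUntil c hc)
  have h2 := SimpleGraph.dist_le (w.dropUntil c hc)
  have h3 : (w.takeUntil c hc).length + (w.dropUntil c hc).length = w.length := by
    have := w.take_spec hc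
    calc (w.takeUntil c hc).length + (w.dropUntil c hc).length
        = ((w.takeUntil c hc).append (w.dropUntil c hc)).length := (Walk.length_append _ _).symm
      _ = w.length := by rw [this]
  omega

lemma connected_of_adj_reachable {G G2 : SimpleGraph V} (hG : G.Connected)
    (h : ∀ x y, G.Adj x y → G2.Reachable x y) : G2.Connected := by
  have hne : Nonempty V := hG.nonempty
  refine ⟨fun u v => ?_⟩
  obtain ⟨w⟩ := hG u v
  induction w with
  | nil => exact Reachable.refl _
  | cons h' _ ih => exact (h _ _ h').trans ih

lemma chain_walk {G' : SimpleGraph V} {l : ℕ} {p : Fin l → V}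
    (hadj : ∀ i : Fin l, ∀ h : (i : ℕ) + 1 < l, G'.Adj (p i) (p ⟨(i : ℕ) + 1, h⟩)) :
    ∀ (d : ℕ) (i j : Fin l), (i : ℕ) + d = (j : ℕ) →
      ∃ w : G'.Walk (p i) (p j), w.length = d := by
  intro d
  induction d with
  | zero =>
    intro i j h
    have : i = j := Fin.ext (by omega)
    subst this; exact ⟨Walk.nil, rfl⟩
  | succ d ih =>
    intro i j h
    have hi1 : (i : ℕ) + 1 < l := by have := j.isLt; omega
    obtain ⟨w, hw⟩ := ih ⟨(i : ℕ) + 1, hi1⟩ j (by simp; omega)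
    exact ⟨Walk.cons (hadj i hi1) w, by simp [hw]⟩

lemma chain_dist_le {G' : SimpleGraph V} {l : ℕ} {p : Fin l → V}
    (hadj : ∀ i : Fin l, ∀ h : (i : ℕ) + 1 < l, G'.Adj (p i) (p ⟨(i : ℕ) + 1, h⟩))
    (i j : Fin l) (hij : (i : ℕ) ≤ (j : ℕ)) :
    G'.dist (p i) (p j) ≤ (j : ℕ) - (i : ℕ) := by
  obtain ⟨w, hw⟩ := chain_walk hadj ((j : ℕ) - (i : ℕ)) i j (by omega)
  exact hw ▸ SimpleGraph.dist_le w

lemma chain_reachable {G' : SimpleGraph V} {l : ℕ} {p : Fin l → V}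
    (hadj : ∀ i : Fin l, ∀ h : (i : ℕ) + 1 < l, G'.Adj (p i) (p ⟨(i : ℕ) + 1, h⟩))
    (i j : Fin l) (hij : (i : ℕ) ≤ (j : ℕ)) :
    G'.Reachable (p i) (p j) := by
  obtain ⟨w, _⟩ := chain_walk hadj ((j : ℕ) - (i : ℕ)) i j (by omega)
  exact ⟨w⟩

lemma ecc_le [Fintype V] {G : SimpleGraph V} {v : V} {n : ℕ} (hne : Nonempty V)
    (h : ∀ u, G.dist v u ≤ n) : ecc G v ≤ n := by
  haveI := hne; exact ciSup_le h

lemma le_ecc [Fintype V] {G : SimpleGraph V} {v : V} (u : V) : G.dist v u ≤ ecc G v :=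
  le_ciSup (Set.Finite.bddAbove (Set.finite_range _)) u

lemma ree_eq_sum {V : Type*} [Fintype V] (G : SimpleGraph V) :
    ree G = ∑ v : V, (deg G v : ℝ) * (1 / (ecc G v : ℝ)) := by
  letI := Classical.decEq V
  letI := Classical.decRel G.Adj
  unfold ree
  have h1 : ∀ e ∈ G.edgeFinset,
      Sym2.lift ⟨fun u v => 1 / (ecc G u : ℝ) + 1 / (ecc G v : ℝ), fun _ _ => by ring⟩ e
      = ∑ v ∈ Finset.univ.filter (fun v => v ∈ e), 1 / (ecc G v : ℝ) := by
    intro e he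
    induction e with
    | _ x y =>
      have hadj : G.Adj x y := by rwa [mem_edgeFinset, mem_edgeSet] at he
      have hxy : x ≠ y := G.ne_of_adj hadj
      have h2 : Finset.univ.filter (fun v => v ∈ s(x, y)) = {x, y} := by
        ext z; simp [Sym2.mem_iff]
      rw [Sym2.lift_mk, h2, Finset.sum_pair hxy]
  rw [Finset.sum_congr rfl h1]
  have h3 : ∀ e ∈ G.edgeFinset, (∑ v ∈ Finset.univ.filter (fun v => v ∈ e), 1 / (ecc G v : ℝ))
      = ∑ v : V, if v ∈ e then 1 / (ecc G v : ℝ) else 0 := by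
    intro e _; rw [Finset.sum_filter]
  rw [Finset.sum_congr rfl h3, Finset.sum_comm]
  refine Finset.sum_congr rfl fun v _ => ?_
  rw [← Finset.sum_filter]
  have h4 : G.edgeFinset.filter (fun e => v ∈ e) = G.incidenceFinset v :=
    (G.incidenceFinset_eq_filter v).symm
  rw [h4, Finset.sum_const, card_incidenceFinset_eq_degree]
  have h5 : G.degree v = deg G v := by
    rw [deg, Set.ncard_eq_toFinset_card', ← neighborFinset_def, card_neighborFinset_eq_degree]
  rw [h5, nsmul_eq_mul]

lemma exists_adj_of_reachable_ne {G : SimpleGraph V} {u v : V} (h : G.Reachable u v)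
    (hne : u ≠ v) : ∃ z, G.Adj u z := by
  obtain ⟨w⟩ := h
  cases w with
  | nil => exact absurd rfl hne
  | cons h' _ => exact ⟨_, h'⟩

end S3A
set_option maxHeartbeats 1600000 in
/-- the α-transformation strictly increases the total reciprocal
edge-eccentricity. -/
theorem stmt3 [Fintype V] (G : SimpleGraph V) (hG : G.Connected)
    -- the path v_1 v_2 … v_l (here `p i` is `v_{i+1}`), l ≥ 2
    (l : ℕ) (hl : 2 ≤ l) (p : Fin l → V) (hinj : Function.Injective p)
    (hchain : ∀ i : Fin l, ∀ h : (i : ℕ) + 1 < l, G.Adj (p i) (p ⟨(i : ℕ) + 1, h⟩))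
    -- H_1 and H_2 are the induced subgraphs on S1 and S2
    (S1 S2 : Set V) (h1conn : (G.induce S1).Connected) (h2conn : (G.induce S2).Connected)
    (h1card : 2 ≤ S1.ncard) (h2card : 2 ≤ S2.ncard)
    (hdisj : S1 ∩ S2 = ∅)
    (hS1p : S1 ∩ Set.range p = {p ⟨0, by omega⟩})
    (hS2p : S2 ∩ Set.range p = {p ⟨l - 1, by omega⟩})
    (hcover : (Set.univ : Set V) = S1 ∪ Set.range p ∪ S2)
    -- every edge of G_1 lies in H_1, in H_2, or on the path
    (hedges : ∀ x y, G.Adj x y → (x ∈ S1 ∧ y ∈ S1) ∨ (x ∈ S2 ∧ y ∈ S2) ∨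
      ∃ i : Fin l, ∃ h : (i : ℕ) + 1 < l, s(x, y) = s(p i, p ⟨(i : ℕ) + 1, h⟩))
    -- the internal vertices of the path have degree 2 in G_1
    (hdeg : ∀ i : Fin l, 0 < (i : ℕ) → (i : ℕ) < l - 1 → deg G (p i) = 2) :
    ree G < ree ((G.deleteEdges {e | ∃ x ∈ S2, G.Adj (p ⟨l - 1, by omega⟩) x ∧
        e = s(p ⟨l - 1, by omega⟩, x)}) ⊔
      SimpleGraph.fromEdgeSet {e | ∃ x ∈ S2, G.Adj (p ⟨l - 1, by omega⟩) x ∧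
        e = s(p ⟨0, by omega⟩, x)}) := by
  classical
  open S3A in
  have h0l : 0 < l := by omega
  have hl1 : l - 1 < l := by omega
  set v0 : V := p ⟨0, h0l⟩ with hv0def
  set vl : V := p ⟨l - 1, hl1⟩ with hvldef
  set Dset : Set (Sym2 V) := {e | ∃ x ∈ S2, G.Adj vl x ∧ e = s(vl, x)} with hDdef
  set Aset : Set (Sym2 V) := {e | ∃ x ∈ S2, G.Adj vl x ∧ e = s(v0, x)} with hAdef
  set G2 : SimpleGraph V := G.deleteEdges Dset ⊔ SimpleGraph.fromEdgeSet Aset with hG2def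
  show ree G < ree G2
  -- ## basic structural facts
  have hdisj' : ∀ {x : V}, x ∈ S1 → x ∈ S2 → False := by
    intro x h1 h2
    have : x ∈ S1 ∩ S2 := ⟨h1, h2⟩
    rw [hdisj] at this
    exact this
  have hv0 : v0 ∈ S1 := by
    have : v0 ∈ S1 ∩ Set.range p := by rw [hS1p]; rfl
    exact this.1
  have hvl : vl ∈ S2 := by
    have : vl ∈ S2 ∩ Set.range p := by rw [hS2p]; rfl
    exact this.1
  have hv0vl : v0 ≠ vl := by
    intro h
    have := hinj h
    rw [Fin.mk.injEq] at this
    omega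
  have hv0nS2 : v0 ∉ S2 := fun h => hdisj' hv0 h
  have hvlnS1 : vl ∉ S1 := fun h => hdisj' h hvl
  have hPS1 : ∀ i : Fin l, p i ∈ S1 → (i : ℕ) = 0 := by
    intro i hi
    have : p i ∈ S1 ∩ Set.range p := ⟨hi, ⟨i, rfl⟩⟩
    rw [hS1p] at this
    have := hinj this
    rw [Fin.mk.injEq] at this  -- ⟨i⟩ = ⟨0⟩ ?
    omega
  have hPS2 : ∀ i : Fin l, p i ∈ S2 → (i : ℕ) = l - 1 := by
    intro i hi
    have : p i ∈ S2 ∩ Set.range p := ⟨hi, ⟨i, rfl⟩⟩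
    rw [hS2p] at this
    have := hinj this
    rw [Fin.mk.injEq] at this
    omega
  have hcross1 : ∀ x y, G.Adj x y → x ∈ S1 → y ∉ S1 → x = v0 := by
    intro x y hxy hx hy
    rcases hedges x y hxy with ⟨_, h⟩ | ⟨h, _⟩ | ⟨i, hi, he⟩
    · exact absurd h hy
    · exact absurd (hdisj' hx h) id
    · rw [Sym2.eq_iff] at he
      rcases he with ⟨rfl, _⟩ | ⟨rfl, _⟩
      · exact congrArg p (Fin.ext (hPS1 i hx))
      · exact congrArg p (Fin.ext (hPS1 _ hx))
  have hcross2 : ∀ x y, G.Adj x y → x ∈ S2 → y ∉ S2 → x = vl := by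
    intro x y hxy hx hy
    rcases hedges x y hxy with ⟨h, _⟩ | ⟨_, h⟩ | ⟨i, hi, he⟩
    · exact absurd (hdisj' h hx) id
    · exact absurd h hy
    · rw [Sym2.eq_iff] at he
      rcases he with ⟨rfl, _⟩ | ⟨rfl, _⟩
      · exact congrArg p (Fin.ext (hPS2 i hx))
      · exact congrArg p (Fin.ext (hPS2 _ hx))
  have hS1S2e : ∀ x y, G.Adj x y → x ∈ S1 → y ∈ S2 → x = v0 ∧ y = vl := by
    intro x y hxy hx hy
    rcases hedges x y hxy with ⟨_, h⟩ | ⟨h, _⟩ | ⟨i, hi, he⟩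
    · exact absurd (hdisj' h hy) id
    · exact absurd (hdisj' hx h) id
    · rw [Sym2.eq_iff] at he
      rcases he with ⟨rfl, rfl⟩ | ⟨rfl, rfl⟩
      · have h1 := hPS1 i hx
        have h2 := hPS2 _ hy
        simp only at h2
        exact ⟨congrArg p (Fin.ext h1), congrArg p (Fin.ext h2)⟩
      · have h1 := hPS1 _ hx
        simp only at h1
        omega
  have hvlnbr : ∀ z, G.Adj vl z → z ∉ S2 → z = p ⟨l - 2, by omega⟩ := by
    intro z hz hzn
    rcases hedges vl z hz with ⟨h, _⟩ | ⟨_, h⟩ | ⟨i, hi, he⟩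
    · exact absurd h hvlnS1
    · exact absurd h hzn
    · rw [Sym2.eq_iff] at he
      rcases he with ⟨h1, rfl⟩ | ⟨h1, rfl⟩
      · have := hinj h1
        rw [Fin.mk.injEq] at this
        omega
      · have := hinj h1
        rw [Fin.mk.injEq] at this
        exact congrArg p (Fin.ext (by simp; omega))
  have hpl2 : G.Adj vl (p ⟨l - 2, by omega⟩) := by
    have h2 : (l - 2 : ℕ) + 1 < l := by omega
    have := hchain ⟨l - 2, by omega⟩ (by simpa using h2)
    have he : (⟨(l - 2 : ℕ) + 1, by simpa using h2⟩ : Fin l) = ⟨l - 1, hl1⟩ :=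
      Fin.ext (by simp; omega)
    rw [he] at this
    exact this.symm
  have hDmem : ∀ x y : V, s(x, y) ∈ Dset ↔
      (x = vl ∧ y ∈ S2 ∧ G.Adj vl y) ∨ (y = vl ∧ x ∈ S2 ∧ G.Adj vl x) := by
    intro x y
    constructor
    · rintro ⟨x', hx', hadj, heq⟩
      rw [Sym2.eq_iff] at heq
      rcases heq with ⟨rfl, rfl⟩ | ⟨rfl, rfl⟩
      · exact Or.inl ⟨rfl, hx', hadj⟩
      · exact Or.inr ⟨rfl, hx', hadj⟩
    · rintro (⟨rfl, h2, h3⟩ | ⟨rfl, h2, h3⟩)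
      · exact ⟨y, h2, h3, rfl⟩
      · exact ⟨x, h2, h3, Sym2.eq_swap.symm⟩
  have hAmem : ∀ x y : V, s(x, y) ∈ Aset ↔
      (x = v0 ∧ y ∈ S2 ∧ G.Adj vl y) ∨ (y = v0 ∧ x ∈ S2 ∧ G.Adj vl x) := by
    intro x y
    constructor
    · rintro ⟨x', hx', hadj, heq⟩
      rw [Sym2.eq_iff] at heq
      rcases heq with ⟨rfl, rfl⟩ | ⟨rfl, rfl⟩
      · exact Or.inl ⟨rfl, hx', hadj⟩
      · exact Or.inr ⟨rfl, hx', hadj⟩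
    · rintro (⟨rfl, h2, h3⟩ | ⟨rfl, h2, h3⟩)
      · exact ⟨y, h2, h3, rfl⟩
      · exact ⟨x, h2, h3, Sym2.eq_swap.symm⟩
  have hG2Adj : ∀ x y, G2.Adj x y ↔
      (G.Adj x y ∧ s(x, y) ∉ Dset) ∨ (s(x, y) ∈ Aset ∧ x ≠ y) := by
    intro x y
    rw [hG2def]
    simp only [sup_adj, deleteEdges_adj, fromEdgeSet_adj]
  have hkeep : ∀ x y, G.Adj x y → ¬(x = vl ∧ y ∈ S2) → ¬(y = vl ∧ x ∈ S2) → G2.Adj x y := by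
    intro x y hxy h1 h2
    rw [hG2Adj]
    left
    refine ⟨hxy, fun hD => ?_⟩
    rcases (hDmem x y).1 hD with ⟨ha, hb, _⟩ | ⟨ha, hb, _⟩
    · exact h1 ⟨ha, hb⟩
    · exact h2 ⟨ha, hb⟩
  have hnew : ∀ x, x ∈ S2 → G.Adj vl x → G2.Adj v0 x := by
    intro x hx hadj
    rw [hG2Adj]
    right
    exact ⟨(hAmem v0 x).2 (Or.inl ⟨rfl, hx, hadj⟩), fun h => hdisj' (h ▸ hv0) hx⟩
  have hG2sub : ∀ x y, G2.Adj x y →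
      G.Adj x y ∨ ((x = v0 ∧ y ∈ S2 ∧ G.Adj vl y) ∨ (y = v0 ∧ x ∈ S2 ∧ G.Adj vl x)) := by
    intro x y h
    rcases (hG2Adj x y).1 h with ⟨h1, _⟩ | ⟨h1, _⟩
    · exact Or.inl h1
    · exact Or.inr ((hAmem x y).1 h1)
  have hchain2 : ∀ i : Fin l, ∀ h : (i : ℕ) + 1 < l, G2.Adj (p i) (p ⟨(i : ℕ) + 1, h⟩) := by
    intro i h
    refine hkeep _ _ (hchain i h) ?_ ?_
    · rintro ⟨h1, h2⟩
      have := hinj h1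
      rw [Fin.mk.injEq] at this
      have := hPS2 _ h2
      simp only at this
      omega
    · rintro ⟨h1, h2⟩
      have := hinj h1
      rw [Fin.mk.injEq] at this
      have := hPS2 _ h2
      omega
  -- ## the potential function measuring progress along the path
  set f : V → ℕ := fun v => if h : ∃ i : Fin l, p i = v then ((h.choose : Fin l) : ℕ)
    else if v ∈ S1 then 0 else l - 1 with hfdef
  have hfp : ∀ i : Fin l, f (p i) = (i : ℕ) := by
    intro i
    have h : ∃ j : Fin l, p j = p i := ⟨i, rfl⟩
    simp only [hfdef, dif_pos h]
    exact congrArg _ (hinj h.choose_spec)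
  have hfS1 : ∀ v ∈ S1, f v = 0 := by
    intro v hv
    by_cases h : ∃ i : Fin l, p i = v
    · obtain ⟨i, rfl⟩ := h
      rw [hfp i]
      exact hPS1 i hv
    · simp only [hfdef, dif_neg h, if_pos hv]
  have hfS2 : ∀ v ∈ S2, f v = l - 1 := by
    intro v hv
    by_cases h : ∃ i : Fin l, p i = v
    · obtain ⟨i, rfl⟩ := h
      rw [hfp i]
      exact hPS2 i hv
    · simp only [hfdef, dif_neg h, if_neg (fun h1 => hdisj' h1 hv)]
  have hstep : ∀ x y, G.Adj x y → f x ≤ f y + 1 := by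
    intro x y hxy
    rcases hedges x y hxy with ⟨h1, h2⟩ | ⟨h1, h2⟩ | ⟨i, hi, he⟩
    · rw [hfS1 x h1, hfS1 y h2]
      omega
    · rw [hfS2 x h1, hfS2 y h2]
      omega
    · rw [Sym2.eq_iff] at he
      rcases he with ⟨rfl, rfl⟩ | ⟨rfl, rfl⟩
      · rw [hfp, hfp]
        simp only [Fin.val_mk]
        omega
      · rw [hfp, hfp]
  have hdlow : ∀ u v : V, f u ≤ f v + G.dist u v :=
    fun u v => S3A.potential_le_dist hstep (hG u v)
  have hdpath : ∀ i j : Fin l, (i : ℕ) ≤ (j : ℕ) → G.dist (p i) (p j) = (j : ℕ) - (i : ℕ) := by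
    intro i j hij
    have h1 := S3A.chain_dist_le hchain i j hij
    have h2 := hdlow (p j) (p i)
    rw [hfp, hfp, SimpleGraph.dist_comm] at h2
    omega
  have hd00 : ∀ i : Fin l, G.dist v0 (p i) = (i : ℕ) := by
    intro i
    have := hdpath ⟨0, h0l⟩ i (by simp)
    simpa using this
  have hdil : ∀ i : Fin l, G.dist (p i) vl = l - 1 - (i : ℕ) := by
    intro i
    exact hdpath i ⟨l - 1, hl1⟩ (by simp; omega)
  have hd0vl : G.dist v0 vl = l - 1 := by simpa using hd00 ⟨l - 1, hl1⟩
  -- ## cut-vertex distance decompositions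
  have hcut1 : ∀ u ∈ S1, ∀ v, v ∉ S1 → G.dist u v = G.dist u v0 + G.dist v0 v := by
    intro u hu v hv
    refine S3A.dist_cut hG (fun w => ?_)
    have := S3A.cross_mem_support (T := S1) (c := v0)
      (fun x y hxy hx hy => hcross1 y x hxy.symm hy hx) w.reverse hv hu
    simpa [Walk.support_reverse] using this
  have hcut2 : ∀ v, v ∉ S2 → ∀ x ∈ S2, G.dist v x = G.dist v vl + G.dist vl x := by
    intro v hv x hx
    refine S3A.dist_cut hG (fun w => ?_)
    exact S3A.cross_mem_support (T := S2) (c := vl)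
      (fun x' y' hxy hx' hy' => hcross2 y' x' hxy.symm hy' hx') w hv hx
  -- ## the two eccentricity witnesses inside S1 and S2
  obtain ⟨ws, hws, hwsmax⟩ := Set.exists_max_image S1 (fun w => G.dist v0 w) S1.toFinite ⟨v0, hv0⟩
  obtain ⟨xs, hxs, hxsmax⟩ := Set.exists_max_image S2 (fun x => G.dist vl x) S2.toFinite ⟨vl, hvl⟩
  set a := G.dist v0 ws with hadef
  set b := G.dist vl xs with hbdef
  have hwsnS2 : ws ∉ S2 := fun h => hdisj' hws h
  have hxsnS1 : xs ∉ S1 := fun h => hdisj' h hxs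
  have ha1 : 1 ≤ a := by
    obtain ⟨w0, hw0, hw0ne⟩ := Set.exists_ne_of_one_lt_ncard (s := S1) (by omega) v0
    have h1 := hwsmax w0 hw0
    have h2 := hG.pos_dist_of_ne (Ne.symm hw0ne)
    omega
  have hb1 : 1 ≤ b := by
    obtain ⟨x0, hx0, hx0ne⟩ := Set.exists_ne_of_one_lt_ncard (s := S2) (by omega) vl
    have h1 := hxsmax x0 hx0
    have h2 := hG.pos_dist_of_ne (Ne.symm hx0ne)
    omega
  have hLa : 1 ≤ l - 1 := by omega
  -- ## key distance equalities
  have hd0S2 : ∀ x ∈ S2, G.dist v0 x = (l - 1) + G.dist vl x := by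
    intro x hx
    rw [hcut2 v0 hv0nS2 x hx, hd0vl]
  have hdiw : ∀ i : Fin l, G.dist (p i) ws = (i : ℕ) + a := by
    intro i
    by_cases h : p i ∈ S1
    · have h0 := hPS1 i h
      have he : p i = v0 := congrArg p (Fin.ext h0)
      rw [he, h0, zero_add]
    · have h1 := hcut1 ws hws (p i) h
      have h2 : G.dist ws v0 = a := by rw [SimpleGraph.dist_comm]
      rw [SimpleGraph.dist_comm] at h1
      rw [h1, h2, hd00]
      omega
  have hdix : ∀ i : Fin l, G.dist (p i) xs = (l - 1 - (i : ℕ)) + b := by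
    intro i
    by_cases h : p i ∈ S2
    · have h0 := hPS2 i h
      have he : p i = vl := congrArg p (Fin.ext h0)
      rw [he, h0]
      simp [hbdef]
    · rw [hcut2 (p i) h xs hxs, hdil]
  -- ## G2 is connected
  have hreach02 : G2.Reachable v0 vl :=
    S3A.chain_reachable hchain2 ⟨0, h0l⟩ ⟨l - 1, hl1⟩ (by simp)
  have hG2conn : G2.Connected := by
    refine S3A.connected_of_adj_reachable hG (fun x y hxy => ?_)
    by_cases hD : s(x, y) ∈ Dset
    · rcases (hDmem x y).1 hD with ⟨rfl, h2, h3⟩ | ⟨rfl, h2, h3⟩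
      · exact hreach02.symm.trans (hnew y h2 h3).reachable
      · exact (hnew x h2 h3).reachable.symm.trans hreach02
    · exact ((hG2Adj x y).2 (Or.inl ⟨hxy, hD⟩)).reachable
  -- ## distance transfer bounds for G2
  have hd2S1 : ∀ u ∈ S1, ∀ w ∈ S1, G2.dist u w ≤ G.dist u w := by
    intro u hu w hw
    exact S3A.dist_transfer hG hcross1 id
      (fun x y hxy hx hy => hkeep x y hxy (fun h => hvlnS1 (h.1 ▸ hx))
        (fun h => hvlnS1 (h.1 ▸ hy))) hu hw
  set ψ : V → V := fun z => if z = vl then v0 else z with hψdef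
  have hψvl : ψ vl = v0 := by simp [hψdef]
  have hψS2 : ∀ z, z ≠ vl → ψ z = z := fun z hz => by simp [hψdef, hz]
  have hd2S2 : ∀ x ∈ S2, ∀ y ∈ S2, G2.dist (ψ x) (ψ y) ≤ G.dist x y := by
    intro x hx y hy
    refine S3A.dist_transfer hG hcross2 ψ (fun x' y' hxy hx' hy' => ?_) hx hy
    by_cases hxv : x' = vl
    · subst hxv
      have hyv : y' ≠ vl := fun h => G.loopless.irrefl _ (h ▸ hxy)
      rw [hψvl, hψS2 y' hyv]
      exact hnew y' hy' hxy
    · by_cases hyv : y' = vl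
      · subst hyv
        rw [hψvl, hψS2 x' hxv]
        exact (hnew x' hx' hxy.symm).symm
      · rw [hψS2 x' hxv, hψS2 y' hyv]
        exact hkeep x' y' hxy (fun h => hxv h.1) (fun h => hyv h.1)
  have hd2v0S2 : ∀ y ∈ S2, y ≠ vl → G2.dist v0 y ≤ G.dist vl y := by
    intro y hy hyv
    have := hd2S2 vl hvl y hy
    rwa [hψvl, hψS2 y hyv] at this
  have hd2path : ∀ i j : Fin l, (i : ℕ) ≤ (j : ℕ) → G2.dist (p i) (p j) ≤ (j : ℕ) - (i : ℕ) :=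
    fun i j hij => S3A.chain_dist_le hchain2 i j hij
  have hcoverz : ∀ z : V, z ∈ S1 ∨ (∃ j : Fin l, z = p j) ∨ z ∈ S2 := by
    intro z
    have : z ∈ S1 ∪ Set.range p ∪ S2 := by rw [← hcover]; trivial
    rcases this with (h | h) | h
    · exact Or.inl h
    · obtain ⟨j, hj⟩ := h
      exact Or.inr (Or.inl ⟨j, hj.symm⟩)
    · exact Or.inr (Or.inr h)
  -- ## eccentricity bounds
  have hE2path : ∀ i : Fin l, ecc G2 (p i) ≤ max ((i : ℕ) + max a b) (l - 1 - (i : ℕ)) := by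
    intro i
    refine S3A.ecc_le ⟨v0⟩ (fun z => ?_)
    have hpi0 : G2.dist (p i) v0 ≤ (i : ℕ) := by
      rw [SimpleGraph.dist_comm]
      simpa using hd2path ⟨0, h0l⟩ i (by simp)
    rcases hcoverz z with hz | ⟨j, rfl⟩ | hz
    · have h1 : G2.dist v0 z ≤ a := le_trans (hd2S1 v0 hv0 z hz) (hwsmax z hz)
      have h2 := hG2conn.dist_triangle (u := p i) (v := v0) (w := z)
      have h3 : G2.dist (p i) z ≤ (i : ℕ) + a := by omega
      exact le_trans h3 (le_max_of_le_left (Nat.add_le_add_left (le_max_left a b) _))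
    · rcases le_total ((i : ℕ)) ((j : ℕ)) with h | h
      · have h1 := hd2path i j h
        have hj := j.isLt
        exact le_trans h1 (le_max_of_le_right (by omega))
      · have h1 := hd2path j i h
        rw [SimpleGraph.dist_comm] at h1
        exact le_trans h1 (le_max_of_le_left (by
          have := le_max_left a b
          omega))
    · by_cases hzv : z = vl
      · subst hzv
        have h1 := hd2path i ⟨l - 1, hl1⟩ (by simp; omega)
        exact le_trans h1 (le_max_of_le_right (by simp))
      · have h1 : G2.dist v0 z ≤ b := le_trans (hd2v0S2 z hz hzv) (hxsmax z hz)
        have h2 := hG2conn.dist_triangle (u := p i) (v := v0) (w := z)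
        have h3 : G2.dist (p i) z ≤ (i : ℕ) + b := by omega
        exact le_trans h3 (le_max_of_le_left (Nat.add_le_add_left (le_max_right a b) _))
  have hE1path : ∀ i : Fin l,
      ((i : ℕ) + a ≤ ecc G (p i)) ∧ ((l - 1 - (i : ℕ)) + b ≤ ecc G (p i)) := by
    intro i
    constructor
    · have h := S3A.le_ecc (G := G) (v := p i) ws
      rwa [hdiw i] at h
    · have h := S3A.le_ecc (G := G) (v := p i) xs
      rwa [hdix i] at h
  have hE1vl : (l - 1 : ℕ) ≤ ecc G vl := by
    have h := S3A.le_ecc (G := G) (v := vl) v0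
    rwa [SimpleGraph.dist_comm, hd0vl] at h
  have hE2S1 : ∀ u ∈ S1, ecc G2 u ≤ ecc G u := by
    intro u hu
    refine S3A.ecc_le ⟨v0⟩ (fun z => ?_)
    have hu0 : G2.dist u v0 ≤ G.dist u v0 := hd2S1 u hu v0 hv0
    have hbig : G.dist u v0 + (l - 1) + b ≤ ecc G u := by
      have h1 := S3A.le_ecc (G := G) (v := u) xs
      have h2 : G.dist u xs = G.dist u v0 + ((l - 1) + G.dist vl xs) := by
        rw [hcut1 u hu xs hxsnS1, hd0S2 xs hxs]
      omega
    rcases hcoverz z with hz | ⟨j, rfl⟩ | hz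
    · exact le_trans (hd2S1 u hu z hz) (S3A.le_ecc z)
    · have h3 : G2.dist v0 (p j) ≤ (j : ℕ) := by simpa using hd2path ⟨0, h0l⟩ j (by simp)
      have h4 := hG2conn.dist_triangle (u := u) (v := v0) (w := p j)
      have hj := j.isLt
      omega
    · by_cases hzv : z = vl
      · subst hzv
        have h3 : G2.dist v0 vl ≤ l - 1 := by
          simpa using hd2path ⟨0, h0l⟩ ⟨l - 1, hl1⟩ (by simp)
        have h4 := hG2conn.dist_triangle (u := u) (v := v0) (w := vl)
        omega
      · have h3 : G2.dist v0 z ≤ b := le_trans (hd2v0S2 z hz hzv) (hxsmax z hz)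
        have h4 := hG2conn.dist_triangle (u := u) (v := v0) (w := z)
        omega
  have hE2S2 : ∀ x ∈ S2, x ≠ vl → ecc G2 x ≤ ecc G x := by
    intro x hx hxv
    refine S3A.ecc_le ⟨v0⟩ (fun z => ?_)
    have hx0 : G2.dist x v0 ≤ G.dist x vl := by
      calc G2.dist x v0 = G2.dist v0 x := SimpleGraph.dist_comm
        _ ≤ G.dist vl x := hd2v0S2 x hx hxv
        _ = G.dist x vl := SimpleGraph.dist_comm
    have hbig : G.dist x vl + (l - 1) + a ≤ ecc G x := by
      have h1 := S3A.le_ecc (G := G) (v := x) ws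
      have h2 := hcut2 ws hwsnS2 x hx
      have h3 := hcut1 ws hws vl hvlnS1
      have h4 : G.dist ws v0 = a := SimpleGraph.dist_comm
      have h5 : G.dist x ws = G.dist ws x := SimpleGraph.dist_comm
      have h6 : G.dist vl x = G.dist x vl := SimpleGraph.dist_comm
      omega
    rcases hcoverz z with hz | ⟨j, rfl⟩ | hz
    · have h1 : G2.dist v0 z ≤ a := le_trans (hd2S1 v0 hv0 z hz) (hwsmax z hz)
      have h4 := hG2conn.dist_triangle (u := x) (v := v0) (w := z)
      omega
    · have h3 : G2.dist v0 (p j) ≤ (j : ℕ) := by simpa using hd2path ⟨0, h0l⟩ j (by simp)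
      have h4 := hG2conn.dist_triangle (u := x) (v := v0) (w := p j)
      have hj := j.isLt
      omega
    · by_cases hzv : z = vl
      · subst hzv
        have h3 : G2.dist v0 vl ≤ l - 1 := by
          simpa using hd2path ⟨0, h0l⟩ ⟨l - 1, hl1⟩ (by simp)
        have h4 := hG2conn.dist_triangle (u := x) (v := v0) (w := vl)
        omega
      · have h1 : G2.dist x z ≤ G.dist x z := by
          have := hd2S2 x hx z hz
          rwa [hψS2 x hxv, hψS2 z hzv] at this
        exact le_trans h1 (S3A.le_ecc z)
  have hE2pos : ∀ v : V, 1 ≤ ecc G2 v := by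
    intro v
    by_cases hv : v = v0
    · subst hv
      have h1 := hG2conn.pos_dist_of_ne hv0vl
      have h2 := S3A.le_ecc (G := G2) (v := v0) vl
      omega
    · have h1 := hG2conn.pos_dist_of_ne hv
      have h2 := S3A.le_ecc (G := G2) (v := v) v0
      omega
  -- ## degrees
  set N : Set V := {x | x ∈ S2 ∧ G.Adj vl x} with hNdef
  set k := N.ncard with hkdef
  have hv0nbrS2 : ∀ z, z ∈ S2 → z ≠ vl → ¬ G.Adj v0 z := by
    intro z hz hzv hadj
    exact hzv (hS1S2e v0 z hadj hv0 hz).2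
  have hdegeq : ∀ v, v ≠ v0 → v ≠ vl → deg G2 v = deg G v := by
    intro v hv1 hv2
    by_cases hv : v ∈ S2 ∧ G.Adj vl v
    · have hset : G2.neighborSet v = insert v0 (G.neighborSet v \ {vl}) := by
        ext z
        simp only [mem_neighborSet, Set.mem_insert_iff, Set.mem_diff, Set.mem_singleton_iff]
        constructor
        · intro h
          rcases hG2sub v z h with h1 | ⟨h1, h2, h3⟩ | ⟨h1, h2, h3⟩
          · refine Or.inr ⟨h1, fun hzv => ?_⟩
            subst hzv
            rcases (hG2Adj v vl).1 h with ⟨_, hnD⟩ | ⟨hA, _⟩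
            · exact hnD ((hDmem v vl).2 (Or.inr ⟨rfl, hv.1, hv.2⟩))
            · rcases (hAmem v vl).1 hA with ⟨h4, _⟩ | ⟨h4, h5, h6⟩
              · exact hv1 h4
              · exact hv0vl h4.symm
          · exact absurd h1 hv1
          · exact Or.inl h1
        · rintro (rfl | ⟨h1, h2⟩)
          · exact (hnew v hv.1 hv.2).symm
          · exact hkeep v z h1 (fun h => hv2 h.1) (fun h => h2 h.1)
      have hvlmem : vl ∈ G.neighborSet v := hv.2.symm
      have hv0nm : v0 ∉ G.neighborSet v \ {vl} := by
        rintro ⟨h1, _⟩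
        exact hv0nbrS2 v hv.1 hv2 h1.symm
      have hpos : 1 ≤ (G.neighborSet v).ncard :=
        (Set.ncard_pos (Set.toFinite _)).2 ⟨vl, hvlmem⟩
      rw [deg, deg, hset, Set.ncard_insert_of_notMem hv0nm (Set.toFinite _),
        Set.ncard_diff_singleton_of_mem hvlmem]
      omega
    · have hset : G2.neighborSet v = G.neighborSet v := by
        ext z
        simp only [mem_neighborSet]
        constructor
        · intro h
          rcases hG2sub v z h with h1 | ⟨h1, _, _⟩ | ⟨h1, h2, h3⟩
          · exact h1
          · exact absurd h1 hv1
          · exact absurd ⟨h2, h3⟩ hv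
        · intro h
          refine hkeep v z h (fun h' => hv2 h'.1) (fun h' => ?_)
          exact hv ⟨h'.2, (h'.1 ▸ h).symm⟩
      rw [deg, deg, hset]
  have hdeg2v0 : deg G2 v0 = deg G v0 + k := by
    have hset : G2.neighborSet v0 = G.neighborSet v0 ∪ N := by
      ext z
      simp only [mem_neighborSet, Set.mem_union, hNdef, Set.mem_setOf_eq]
      constructor
      · intro h
        rcases hG2sub v0 z h with h1 | ⟨_, h2, h3⟩ | ⟨h1, h2, h3⟩
        · exact Or.inl h1
        · exact Or.inr ⟨h2, h3⟩
        · exact absurd h2 hv0nS2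
      · rintro (h | ⟨h1, h2⟩)
        · exact hkeep v0 z h (fun h' => hvlnS1 (h'.1 ▸ hv0)) (fun h' => hv0nS2 h'.2)
        · exact hnew z h1 h2
    have hdisjN : Disjoint (G.neighborSet v0) N := by
      rw [Set.disjoint_iff_inter_eq_empty]
      ext z
      simp only [Set.mem_inter_iff, mem_neighborSet, hNdef, Set.mem_setOf_eq,
        Set.mem_empty_iff_false, iff_false, not_and]
      intro h1 h2 h3
      have := (hS1S2e v0 z h1 hv0 h2).2
      subst this
      exact G.loopless.irrefl _ h3
    rw [deg, deg, hset, Set.ncard_union_eq hdisjN (Set.toFinite _) (Set.toFinite _)]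
  have hl2l : l - 2 < l := by omega
  have hpl2' : G2.Adj vl (p ⟨l - 2, hl2l⟩) := by
    have h := hchain2 ⟨l - 2, hl2l⟩ (by simp; omega)
    have he : (⟨((⟨l - 2, hl2l⟩ : Fin l) : ℕ) + 1, by simp; omega⟩ : Fin l) = ⟨l - 1, hl1⟩ :=
      Fin.ext (by simp; omega)
    rw [he] at h
    exact h.symm
  have hdeg2vl : deg G2 vl = 1 := by
    have hset : G2.neighborSet vl = {p ⟨l - 2, hl2l⟩} := by
      ext z
      simp only [mem_neighborSet, Set.mem_singleton_iff]
      constructor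
      · intro h
        rcases (hG2Adj vl z).1 h with ⟨h1, h2⟩ | ⟨h1, h2⟩
        · have hzS2 : z ∉ S2 := fun hz => h2 ((hDmem vl z).2 (Or.inl ⟨rfl, hz, h1⟩))
          exact hvlnbr z h1 hzS2
        · rcases (hAmem vl z).1 h1 with ⟨h3, _⟩ | ⟨h3, h4, h5⟩
          · exact absurd h3.symm hv0vl
          · exact absurd h5 (G.loopless.irrefl vl)
      · rintro rfl
        exact hpl2'
    rw [deg, hset, Set.ncard_singleton]
  have hpl2nS2 : p ⟨l - 2, hl2l⟩ ∉ S2 := by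
    intro h
    have := hPS2 _ h
    simp only [Fin.val_mk] at this
    omega
  have hdeg1vl : deg G vl = 1 + k := by
    have hset : G.neighborSet vl = {p ⟨l - 2, hl2l⟩} ∪ N := by
      ext z
      simp only [mem_neighborSet, Set.mem_union, Set.mem_singleton_iff, hNdef,
        Set.mem_setOf_eq]
      constructor
      · intro h
        by_cases hz : z ∈ S2
        · exact Or.inr ⟨hz, h⟩
        · exact Or.inl (hvlnbr z h hz)
      · rintro (rfl | ⟨h1, h2⟩)
        · exact hpl2
        · exact h2
    have hdisjN : Disjoint ({p ⟨l - 2, hl2l⟩} : Set V) N := by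
      rw [Set.disjoint_iff_inter_eq_empty]
      ext z
      simp only [Set.mem_inter_iff, Set.mem_singleton_iff, hNdef, Set.mem_setOf_eq,
        Set.mem_empty_iff_false, iff_false, not_and]
      rintro rfl h
      exact absurd h hpl2nS2
    rw [deg, hset, Set.ncard_union_eq hdisjN (Set.toFinite _) (Set.toFinite _),
      Set.ncard_singleton]
  have hk1 : 1 ≤ k := by
    obtain ⟨y0, hy0, hy0ne⟩ := Set.exists_ne_of_one_lt_ncard (s := S2) (by omega) vl
    obtain ⟨z, hz⟩ := S3A.exists_adj_of_reachable_ne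
      (h2conn ⟨vl, hvl⟩ ⟨y0, hy0⟩) (fun h => hy0ne (congrArg Subtype.val h).symm)
    have hadj : G.Adj vl (z : V) := hz
    exact (Set.ncard_pos (Set.toFinite N)).2 ⟨(z : V), ⟨z.2, hadj⟩⟩
  have hD2 : 2 ≤ deg G v0 := by
    obtain ⟨w1, hw1, hw1ne⟩ := Set.exists_ne_of_one_lt_ncard (s := S1) (by omega) v0
    obtain ⟨z, hz⟩ := S3A.exists_adj_of_reachable_ne
      (h1conn ⟨v0, hv0⟩ ⟨w1, hw1⟩) (fun h => hw1ne (congrArg Subtype.val h).symm)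
    have hadjz : G.Adj v0 (z : V) := hz
    have h1l : (1 : ℕ) < l := by omega
    have hp01 : G.Adj v0 (p ⟨1, h1l⟩) := by
      have h := hchain ⟨0, h0l⟩ (by simpa using h1l)
      have he : (⟨((⟨0, h0l⟩ : Fin l) : ℕ) + 1, by simpa using h1l⟩ : Fin l) = ⟨1, h1l⟩ :=
        Fin.ext (by simp)
      rwa [he] at h
    have hzp1 : (z : V) ≠ p ⟨1, h1l⟩ := by
      intro h
      have : p ⟨1, h1l⟩ ∈ S1 := h ▸ z.2
      have := hPS1 _ this
      simp only [Fin.val_mk] at this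
      omega
    have hsub : ({(z : V), p ⟨1, h1l⟩} : Set V) ⊆ G.neighborSet v0 := by
      rintro y (rfl | rfl)
      · exact hadjz
      · exact hp01
    calc (2 : ℕ) = ({(z : V), p ⟨1, h1l⟩} : Set V).ncard := (Set.ncard_pair hzp1).symm
      _ ≤ (G.neighborSet v0).ncard := Set.ncard_le_ncard hsub (Set.toFinite _)
  -- ## assembling the sums
  haveI : Nonempty V := ⟨v0⟩
  rw [S3A.ree_eq_sum, S3A.ree_eq_sum, ← sub_pos, ← Finset.sum_sub_distrib]
  set h : V → ℝ := fun v => (deg G2 v : ℝ) * (1 / (ecc G2 v : ℝ))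
    - (deg G v : ℝ) * (1 / (ecc G v : ℝ)) with hhdef
  have hposR : ∀ v : V, (0 : ℝ) < (ecc G2 v : ℝ) := by
    intro v
    have := hE2pos v
    exact_mod_cast Nat.lt_of_lt_of_le Nat.zero_lt_one this
  have hterm : ∀ v : V, deg G2 v = deg G v → ecc G2 v ≤ ecc G v → 0 ≤ h v := by
    intro v hdeq hle
    simp only [hhdef]
    rw [hdeq]
    have h1 : (1 : ℝ) / (ecc G v : ℝ) ≤ 1 / (ecc G2 v : ℝ) :=
      one_div_le_one_div_of_le (hposR v) (Nat.cast_le.2 hle)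
    have h2 : (0 : ℝ) ≤ (deg G v : ℝ) := Nat.cast_nonneg _
    nlinarith
  set P : Finset V := Finset.univ.image p with hPdef
  have hsplit : ∑ v : V, h v = ∑ v ∈ P, h v + ∑ v ∈ Pᶜ, h v :=
    (Finset.sum_add_sum_compl P h).symm
  have hPc : 0 ≤ ∑ v ∈ Pᶜ, h v := by
    refine Finset.sum_nonneg (fun v hv => ?_)
    have hvnp : ∀ j : Fin l, v ≠ p j := by
      intro j hj
      rw [Finset.mem_compl, hPdef] at hv
      exact hv (Finset.mem_image.2 ⟨j, Finset.mem_univ j, hj.symm⟩)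
    have hvv0 : v ≠ v0 := hvnp ⟨0, h0l⟩
    have hvvl : v ≠ vl := hvnp ⟨l - 1, hl1⟩
    rcases hcoverz v with hz | ⟨j, hj⟩ | hz
    · exact hterm v (hdegeq v hvv0 hvvl) (hE2S1 v hz)
    · exact absurd hj (hvnp j)
    · exact hterm v (hdegeq v hvv0 hvvl) (hE2S2 v hz hvvl)
  have hPsum : ∑ v ∈ P, h v = ∑ i : Fin l, h (p i) := by
    rw [hPdef]
    exact Finset.sum_image (fun i _ j _ hij => hinj hij)
  set If : Finset (Fin l) := Finset.univ.filter (fun i => 0 < (i : ℕ) ∧ (i : ℕ) < l - 1)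
    with hIfdef
  have hi0il : (⟨0, h0l⟩ : Fin l) ≠ ⟨l - 1, hl1⟩ := by
    intro hE
    rw [Fin.mk.injEq] at hE
    omega
  have hufin : (Finset.univ : Finset (Fin l)) = {⟨0, h0l⟩, ⟨l - 1, hl1⟩} ∪ If := by
    ext i
    simp only [Finset.mem_univ, true_iff, Finset.mem_union, Finset.mem_insert,
      Finset.mem_singleton, hIfdef, Finset.mem_filter, true_and]
    have hi := i.isLt
    by_cases h1 : (i : ℕ) = 0
    · exact Or.inl (Or.inl (Fin.ext h1))
    · by_cases h2 : (i : ℕ) = l - 1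
      · exact Or.inl (Or.inr (Fin.ext h2))
      · exact Or.inr ⟨by omega, by omega⟩
  have hdisjI : Disjoint ({⟨0, h0l⟩, ⟨l - 1, hl1⟩} : Finset (Fin l)) If := by
    rw [Finset.disjoint_left]
    intro i hi hiI
    rw [hIfdef, Finset.mem_filter] at hiI
    have hiI2 := hiI.2
    rcases Finset.mem_insert.1 hi with rfl | hi'
    · simp only [Fin.val_mk] at hiI2
      omega
    · rw [Finset.mem_singleton] at hi'
      subst hi'
      simp only [Fin.val_mk] at hiI2
      omega
  have hFinsum : ∑ i : Fin l, h (p i)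
      = h v0 + h vl + ∑ i ∈ If, h (p i) := by
    rw [hufin, Finset.sum_union hdisjI, Finset.sum_pair hi0il]
  have hIfne : ∀ i ∈ If, p i ≠ v0 ∧ p i ≠ vl := by
    intro i hi
    rw [hIfdef, Finset.mem_filter] at hi
    constructor
    · intro hE
      have h1 : (i : ℕ) = 0 := congrArg Fin.val (hinj hE)
      omega
    · intro hE
      have h1 : (i : ℕ) = l - 1 := congrArg Fin.val (hinj hE)
      omega
  rw [hsplit, hPsum, hFinsum]
  rcases le_or_gt b a with hba | hab
  · -- Case 1 : b ≤ a
    have hmaxab : max a b = a := max_eq_left hba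
    have hIfpos : 0 ≤ ∑ i ∈ If, h (p i) := by
      refine Finset.sum_nonneg (fun i hi => ?_)
      obtain ⟨hne0, hnel⟩ := hIfne i hi
      refine hterm _ (hdegeq _ hne0 hnel) ?_
      refine le_trans (hE2path i) ?_
      rw [hmaxab]
      exact max_le (hE1path i).1 (le_trans (Nat.le_add_right _ b) (hE1path i).2)
    have hB1 : ecc G2 v0 ≤ max a (l - 1) := by
      have := hE2path ⟨0, h0l⟩
      simpa [hmaxab] using this
    have hB2 : ecc G2 v0 ≤ ecc G v0 := hE2S1 v0 hv0
    have hB3 : (l - 1) + a ≤ ecc G vl := by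
      have := (hE1path ⟨l - 1, hl1⟩).1
      simpa using this
    have hB4 : ecc G2 vl ≤ (l - 1) + a := by
      have h1 := hE2path ⟨l - 1, hl1⟩
      simp only [Fin.val_mk, hmaxab] at h1
      refine le_trans h1 ?_
      exact max_le (le_refl _) (by omega)
    have key : 0 < h v0 + h vl := by
      have e0 : h v0 = ((deg G v0 : ℝ) + (k : ℝ)) * (1 / (ecc G2 v0 : ℝ))
          - (deg G v0 : ℝ) * (1 / (ecc G v0 : ℝ)) := by
        simp only [hhdef]
        rw [hdeg2v0]
        push_cast
        ring
      have el : h vl = 1 * (1 / (ecc G2 vl : ℝ)) - (1 + (k : ℝ)) * (1 / (ecc G vl : ℝ)) := by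
        simp only [hhdef]
        rw [hdeg2vl, hdeg1vl]
        push_cast
        ring
      have hMpos : (0 : ℝ) < ((max a (l - 1) : ℕ) : ℝ) := Nat.cast_pos.2 (by omega)
      have hLapos : (0 : ℝ) < (((l - 1) + a : ℕ) : ℝ) := Nat.cast_pos.2 (by omega)
      have hMlt : ((max a (l - 1) : ℕ) : ℝ) < (((l - 1) + a : ℕ) : ℝ) :=
        Nat.cast_lt.2 (max_lt (by omega) (by omega))
      have hkpos : (0 : ℝ) < (k : ℝ) := Nat.cast_pos.2 (by omega)
      have c1 : (1 : ℝ) / (ecc G v0 : ℝ) ≤ 1 / (ecc G2 v0 : ℝ) :=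
        one_div_le_one_div_of_le (hposR v0) (Nat.cast_le.2 hB2)
      have c2 : (1 : ℝ) / ((max a (l - 1) : ℕ) : ℝ) ≤ 1 / (ecc G2 v0 : ℝ) :=
        one_div_le_one_div_of_le (hposR v0) (Nat.cast_le.2 hB1)
      have c3 : (1 : ℝ) / (((l - 1) + a : ℕ) : ℝ) ≤ 1 / (ecc G2 vl : ℝ) :=
        one_div_le_one_div_of_le (hposR vl) (Nat.cast_le.2 hB4)
      have c4 : (1 : ℝ) / (ecc G vl : ℝ) ≤ 1 / (((l - 1) + a : ℕ) : ℝ) :=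
        one_div_le_one_div_of_le hLapos (Nat.cast_le.2 hB3)
      have c5 : (1 : ℝ) / (((l - 1) + a : ℕ) : ℝ) < 1 / ((max a (l - 1) : ℕ) : ℝ) :=
        one_div_lt_one_div_of_lt hMpos hMlt
      have hD0 : (0 : ℝ) ≤ (deg G v0 : ℝ) := Nat.cast_nonneg _
      have m1 : (deg G v0 : ℝ) * (1 / (ecc G v0 : ℝ))
          ≤ (deg G v0 : ℝ) * (1 / (ecc G2 v0 : ℝ)) := mul_le_mul_of_nonneg_left c1 hD0
      have m2 : (k : ℝ) * (1 / ((max a (l - 1) : ℕ) : ℝ))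
          ≤ (k : ℝ) * (1 / (ecc G2 v0 : ℝ)) := mul_le_mul_of_nonneg_left c2 (le_of_lt hkpos)
      have m3 : (1 + (k : ℝ)) * (1 / (ecc G vl : ℝ))
          ≤ (1 + (k : ℝ)) * (1 / (((l - 1) + a : ℕ) : ℝ)) :=
        mul_le_mul_of_nonneg_left c4 (by linarith)
      have m4 : 0 < (k : ℝ) * (1 / ((max a (l - 1) : ℕ) : ℝ) - 1 / (((l - 1) + a : ℕ) : ℝ)) :=
        mul_pos hkpos (sub_pos.2 c5)
      rw [e0, el]
      linarith [m1, m2, m3, c3, m4]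
    linarith [key, hIfpos, hPc]
  · -- Case 2 : a < b
    have hmaxab : max a b = b := max_eq_right (le_of_lt hab)
    have hIfpos : 0 ≤ ∑ i ∈ If, h (p i) := by
      have hform : ∀ i ∈ If, h (p i)
          = 2 * (1 / (ecc G2 (p i) : ℝ)) - 2 * (1 / (ecc G (p i) : ℝ)) := by
        intro i hi
        rw [hIfdef, Finset.mem_filter] at hi
        obtain ⟨hne0, hnel⟩ := hIfne i (by rw [hIfdef, Finset.mem_filter]; exact hi)
        simp only [hhdef]
        rw [hdegeq _ hne0 hnel, hdeg i hi.2.1 hi.2.2]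
        push_cast
        ring
      rw [Finset.sum_congr rfl hform, Finset.sum_sub_distrib]
      have hswap : ∑ i ∈ If, (2 : ℝ) * (1 / (ecc G (p i) : ℝ))
          = ∑ i ∈ If, (2 : ℝ) * (1 / (ecc G (p ⟨l - 1 - (i : ℕ), by omega⟩) : ℝ)) := by
        refine Finset.sum_nbij' (fun i => (⟨l - 1 - (i : ℕ), by omega⟩ : Fin l))
          (fun i => (⟨l - 1 - (i : ℕ), by omega⟩ : Fin l)) ?_ ?_ ?_ ?_ ?_
        · intro i hi
          rw [hIfdef, Finset.mem_filter] at hi ⊢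
          refine ⟨Finset.mem_univ _, ?_⟩
          simp only [Fin.val_mk]
          omega
        · intro i hi
          rw [hIfdef, Finset.mem_filter] at hi ⊢
          refine ⟨Finset.mem_univ _, ?_⟩
          simp only [Fin.val_mk]
          omega
        · intro i hi
          rw [hIfdef, Finset.mem_filter] at hi
          exact Fin.ext (by simp only [Fin.val_mk]; omega)
        · intro i hi
          rw [hIfdef, Finset.mem_filter] at hi
          exact Fin.ext (by simp only [Fin.val_mk]; omega)
        · intro i hi
          rw [hIfdef, Finset.mem_filter] at hi
          simp only [Fin.val_mk]
          have he : (⟨l - 1 - (l - 1 - (i : ℕ)), by omega⟩ : Fin l) = i :=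
            Fin.ext (by simp only [Fin.val_mk]; omega)
          rw [he]
      have hptle : ∀ i ∈ If, (2 : ℝ) * (1 / (ecc G (p ⟨l - 1 - (i : ℕ), by omega⟩) : ℝ))
          ≤ 2 * (1 / (ecc G2 (p i) : ℝ)) := by
        intro i hi
        rw [hIfdef, Finset.mem_filter] at hi
        have hle : ecc G2 (p i) ≤ ecc G (p ⟨l - 1 - (i : ℕ), by omega⟩) := by
          refine le_trans (hE2path i) ?_
          rw [hmaxab]
          have h1 := (hE1path ⟨l - 1 - (i : ℕ), by omega⟩).1
          have h2 := (hE1path ⟨l - 1 - (i : ℕ), by omega⟩).2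
          simp only [Fin.val_mk] at h1 h2
          refine max_le ?_ ?_
          · refine le_trans ?_ h2
            have := i.isLt
            omega
          · exact le_trans (by omega) h1
        have := one_div_le_one_div_of_le (hposR (p i)) (Nat.cast_le.2 hle)
        linarith
      have := Finset.sum_le_sum hptle
      rw [← hswap] at this
      linarith
    have hB1 : ecc G2 v0 ≤ max b (l - 1) := by
      have := hE2path ⟨0, h0l⟩
      simpa [hmaxab] using this
    have hB2 : (l - 1) + b ≤ ecc G v0 := by
      have := (hE1path ⟨0, h0l⟩).2
      simpa using this
    have hB3 : ecc G2 vl ≤ (l - 1) + b := by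
      have h1 := hE2path ⟨l - 1, hl1⟩
      simp only [Fin.val_mk, hmaxab] at h1
      refine le_trans h1 ?_
      exact max_le (le_refl _) (by omega)
    have hB4 : max b (l - 1) ≤ ecc G vl := by
      refine max_le ?_ hE1vl
      have := (hE1path ⟨l - 1, hl1⟩).2
      simp only [Fin.val_mk] at this
      have h0 : l - 1 - (l - 1) = 0 := by omega
      rw [h0, zero_add] at this
      exact this
    have key : 0 < h v0 + h vl := by
      have e0 : h v0 = ((deg G v0 : ℝ) + (k : ℝ)) * (1 / (ecc G2 v0 : ℝ))
          - (deg G v0 : ℝ) * (1 / (ecc G v0 : ℝ)) := by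
        simp only [hhdef]
        rw [hdeg2v0]
        push_cast
        ring
      have el : h vl = 1 * (1 / (ecc G2 vl : ℝ)) - (1 + (k : ℝ)) * (1 / (ecc G vl : ℝ)) := by
        simp only [hhdef]
        rw [hdeg2vl, hdeg1vl]
        push_cast
        ring
      have hMpos : (0 : ℝ) < ((max b (l - 1) : ℕ) : ℝ) := Nat.cast_pos.2 (by omega)
      have hLbpos : (0 : ℝ) < (((l - 1) + b : ℕ) : ℝ) := Nat.cast_pos.2 (by omega)
      have hMlt : ((max b (l - 1) : ℕ) : ℝ) < (((l - 1) + b : ℕ) : ℝ) :=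
        Nat.cast_lt.2 (max_lt (by omega) (by omega))
      have hkR : (1 : ℝ) ≤ (k : ℝ) := by exact_mod_cast hk1
      have hDR : (2 : ℝ) ≤ (deg G v0 : ℝ) := by exact_mod_cast hD2
      have c1 : (1 : ℝ) / ((max b (l - 1) : ℕ) : ℝ) ≤ 1 / (ecc G2 v0 : ℝ) :=
        one_div_le_one_div_of_le (hposR v0) (Nat.cast_le.2 hB1)
      have c2 : (1 : ℝ) / (ecc G v0 : ℝ) ≤ 1 / (((l - 1) + b : ℕ) : ℝ) :=
        one_div_le_one_div_of_le hLbpos (Nat.cast_le.2 hB2)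
      have c3 : (1 : ℝ) / (((l - 1) + b : ℕ) : ℝ) ≤ 1 / (ecc G2 vl : ℝ) :=
        one_div_le_one_div_of_le (hposR vl) (Nat.cast_le.2 hB3)
      have c4 : (1 : ℝ) / (ecc G vl : ℝ) ≤ 1 / ((max b (l - 1) : ℕ) : ℝ) :=
        one_div_le_one_div_of_le hMpos (Nat.cast_le.2 hB4)
      have c5 : (1 : ℝ) / (((l - 1) + b : ℕ) : ℝ) < 1 / ((max b (l - 1) : ℕ) : ℝ) :=
        one_div_lt_one_div_of_lt hMpos hMlt
      have m1 : ((deg G v0 : ℝ) + (k : ℝ)) * (1 / ((max b (l - 1) : ℕ) : ℝ))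
          ≤ ((deg G v0 : ℝ) + (k : ℝ)) * (1 / (ecc G2 v0 : ℝ)) :=
        mul_le_mul_of_nonneg_left c1 (by linarith)
      have m2 : (deg G v0 : ℝ) * (1 / (ecc G v0 : ℝ))
          ≤ (deg G v0 : ℝ) * (1 / (((l - 1) + b : ℕ) : ℝ)) :=
        mul_le_mul_of_nonneg_left c2 (by linarith)
      have m4 : (1 + (k : ℝ)) * (1 / (ecc G vl : ℝ))
          ≤ (1 + (k : ℝ)) * (1 / ((max b (l - 1) : ℕ) : ℝ)) :=
        mul_le_mul_of_nonneg_left c4 (by linarith)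
      have m5 : 0 < ((deg G v0 : ℝ) - 1)
          * (1 / ((max b (l - 1) : ℕ) : ℝ) - 1 / (((l - 1) + b : ℕ) : ℝ)) :=
        mul_pos (by linarith) (sub_pos.2 c5)
      rw [e0, el]
      linarith [m1, m2, c3, m4, m5]
    linarith [key, hIfpos, hPc]
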